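/- Let d = (d_1, ..., d_n) be a non-increasing sequence of positive integers with even sum at most 2n - 2, and let k ∈ [n]. If there exists a forest F with vertex set {u_1, ..., u_n}, d_F(u_i) = d_i for all i, such that D = {u_1, ..., u_k} is an independent dominating set, then Σ_{i=1}^k d_i ≥ n - k and 0 ≤ Σ_{i=k+1}^n d_i - Σ_{i=1}^k d_i ≤ max{0, 2(n_{≥2}(d) - k) - 2}. -/

import Mathlib

open Finset

/-- The degree of a vertex in a simple graph. -/
noncomputable def deg {V : Type*} (G : SimpleGraph V) (v : V) : ℕ := Nat.card {u // G.Adj v u}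

/-- `D` is a dominating set of `G`. -/
def DomSet {V : Type*} (G : SimpleGraph V) (D : Set V) : Prop := ∀ v ∉ D, ∃ u ∈ D, G.Adj u v

/-- `S` is an independent set of `G`. -/
def IndepSet {V : Type*} (G : SimpleGraph V) (S : Set V) : Prop :=
  ∀ u ∈ S, ∀ v ∈ S, ¬ G.Adj u v

/-- The domination number of `G`. -/
noncomputable def domNum {V : Type*} [Fintype V] (G : SimpleGraph V) : ℕ :=
  sInf {k | ∃ D : Finset V, D.card = k ∧ DomSet G ↑D}

/-- The independence number of `G`. -/
noncomputable def indepNum {V : Type*} [Fintype V] (G : SimpleGraph V) : ℕ :=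
  sSup {k | ∃ S : Finset V, S.card = k ∧ IndepSet G ↑S}

/-- Sum of the first `k` entries `d_1 + ... + d_k` (0-indexed: indices `< k`). -/
def psum {n : ℕ} (d : Fin n → ℕ) (k : ℕ) : ℕ := ∑ i : Fin n, if (i : ℕ) < k then d i else 0

/-- Sum of the remaining entries `d_{k+1} + ... + d_n` (0-indexed: indices `≥ k`). -/
def ssum {n : ℕ} (d : Fin n → ℕ) (k : ℕ) : ℕ := ∑ i : Fin n, if k ≤ (i : ℕ) then d i else 0

/-- Slater's bound `sl(d) = min{k ∈ [n] : d_1 + ... + d_k ≥ n - k}`. -/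
noncomputable def slater (n : ℕ) (d : Fin n → ℕ) : ℕ := sInf {k | 1 ≤ k ∧ k ≤ n ∧ n - k ≤ psum d k}

/-- The annihilation number `a(d) = n - min{k ∈ [n] : Σ_{i≤k} d_i ≥ Σ_{i>k} d_i}`. -/
noncomputable def annih (n : ℕ) (d : Fin n → ℕ) : ℕ := n - sInf {k | 1 ≤ k ∧ k ≤ n ∧ ssum d k ≤ psum d k}

/-- The number of entries of `d` equal to `j`. -/
def nCount {n : ℕ} (d : Fin n → ℕ) (j : ℕ) : ℕ := (Finset.univ.filter fun i => d i = j).card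

/-- The number of entries of `d` that are at least `2`. -/
def nGe2 {n : ℕ} (d : Fin n → ℕ) : ℕ := (Finset.univ.filter fun i => 2 ≤ d i).card

/-- `F` is a forest realization of the degree sequence `d`. -/
def IsForestReal {n : ℕ} (d : Fin n → ℕ) (F : SimpleGraph (Fin n)) : Prop :=
  F.IsAcyclic ∧ ∀ i, deg F i = d i

/-- The minimum domination number over all forest realizations of `d`. -/
noncomputable def gammaFmin {n : ℕ} (d : Fin n → ℕ) : ℕ :=
  sInf {m | ∃ F : SimpleGraph (Fin n), IsForestReal d F ∧ domNum F = m}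

/-- The maximum independence number over all forest realizations of `d`. -/
noncomputable def alphaFmax {n : ℕ} (d : Fin n → ℕ) : ℕ :=
  sSup {m | ∃ F : SimpleGraph (Fin n), IsForestReal d F ∧ indepNum F = m}

open SimpleGraph in
lemma forest_edge_bound {n : ℕ} (G : SimpleGraph (Fin n)) [DecidableRel G.Adj]
    (hG : G.IsAcyclic) (hne : G.edgeFinset.Nonempty) (S : Finset (Fin n))
    (hS : ∀ v, v ∈ G.support → v ∈ S) :
    G.edgeFinset.card + 1 ≤ S.card := by
  classical
  set root : Fin n → Fin n := fun v => Quot.out (G.connectedComponentMk v) with hrootdef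
  have hout : ∀ v, G.connectedComponentMk (root v) = G.connectedComponentMk v :=
    fun v => Quot.out_eq _
  have hr1 : ∀ v, G.Reachable v (root v) :=
    fun v => (ConnectedComponent.exact (hout v)).symm
  have hr2 : ∀ {x y : Fin n}, G.Adj x y → root x = root y :=
    fun h => congrArg Quot.out (ConnectedComponent.sound h.reachable)
  set P : ∀ v : Fin n, G.Path v (root v) := fun v => (hr1 v).some.toPath with hP
  set L : Fin n → ℕ := fun v => (P v).1.length with hL
  have uniq : ∀ {v : Fin n} (q : G.Walk v (root v)), q.IsPath → q = (P v).1 := by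
    intro v q hq
    exact congrArg Subtype.val (hG.path_unique ⟨q, hq⟩ (P v))
  have key1 : ∀ {x y : Fin n} (h : G.Adj x y), x ∉ (P y).1.support →
      (P x).1 = SimpleGraph.Walk.cons h ((P y).1.copy rfl (hr2 h).symm) := by
    intro x y h hx
    refine (uniq _ ?_).symm
    rw [SimpleGraph.Walk.cons_isPath_iff]
    refine ⟨(SimpleGraph.Walk.isPath_copy _ _ _).mpr (P y).2, ?_⟩
    rwa [SimpleGraph.Walk.support_copy]
  have key2 : ∀ {x y : Fin n} (h : G.Adj x y), x ∈ (P y).1.support → L x < L y := by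
    intro x y h hx
    have hcast : ((P y).1.dropUntil x hx).copy rfl (hr2 h).symm = (P x).1 := by
      apply uniq
      rw [SimpleGraph.Walk.isPath_copy]
      exact (P y).2.dropUntil hx
    have hlen : L x = ((P y).1.dropUntil x hx).length := by
      show (P x).1.length = _
      rw [← hcast, SimpleGraph.Walk.length_copy]
    have hspec := SimpleGraph.Walk.take_spec (P y).1 hx
    have hlensum : ((P y).1.takeUntil x hx).length + ((P y).1.dropUntil x hx).length = L y := by
      show _ = (P y).1.length
      rw [← SimpleGraph.Walk.length_append, hspec]
    have htne : ((P y).1.takeUntil x hx).length ≠ 0 := by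
      intro h0
      exact h.ne' (SimpleGraph.Walk.eq_of_length_eq_zero h0)
    omega
  have key3 : ∀ {x y : Fin n} (h : G.Adj x y), x ∉ (P y).1.support → L x = L y + 1 := by
    intro x y h hx
    show (P x).1.length = (P y).1.length + 1
    rw [key1 h hx, SimpleGraph.Walk.length_cons, SimpleGraph.Walk.length_copy]
  have trich : ∀ {x y : Fin n}, G.Adj x y → L x < L y ∨ L y < L x := by
    intro x y h
    by_cases hx : x ∈ (P y).1.support
    · exact Or.inl (key2 h hx)
    · right; have := key3 h hx; omega
  have farkey : ∀ {x y : Fin n} (h : G.Adj x y), L y < L x → (P x).1.getVert 1 = y := by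
    intro x y h hlt
    have hx : x ∉ (P y).1.support := fun hx => absurd (key2 h hx) (by omega)
    rw [key1 h hx]
    exact (SimpleGraph.Walk.getVert_cons_succ (n := 0) _ _).trans (SimpleGraph.Walk.getVert_zero _)
  set f : Sym2 (Fin n) → Fin n := Sym2.lift ⟨fun x y =>
      if L x < L y then y else if L y < L x then x else max x y, by
    intro x y
    dsimp only
    rcases lt_trichotomy (L x) (L y) with h | h | h
    · rw [if_pos h, if_neg (by omega), if_pos h]
    · rw [if_neg (by omega), if_neg (by omega), if_neg (by omega), if_neg (by omega),
        max_comm]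
    · rw [if_neg (by omega), if_pos h, if_pos h]⟩ with hf
  have f_spec : ∀ {x y : Fin n}, G.Adj x y → L y < L x → f s(x, y) = x := by
    intro x y h hlt
    rw [hf, Sym2.lift_mk]
    dsimp only
    rw [if_neg (by omega), if_pos hlt]
  have orient : ∀ {x y : Fin n}, G.Adj x y →
      ∃ a b : Fin n, s(x, y) = s(a, b) ∧ G.Adj a b ∧ L b < L a := by
    intro x y h
    rcases trich h with hlt | hlt
    · exact ⟨y, x, Sym2.eq_swap, h.symm, hlt⟩
    · exact ⟨x, y, rfl, h, hlt⟩
  have e_form : ∀ {x y : Fin n}, G.Adj x y →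
      s(x, y) = s(f s(x, y), (P (f s(x, y))).1.getVert 1) := by
    intro x y h
    obtain ⟨a, b, hab, hadj, hlt⟩ := orient h
    rw [hab, f_spec hadj hlt, farkey hadj hlt]
  have hLpos : ∀ {x y : Fin n}, G.Adj x y → 1 ≤ L (f s(x, y)) := by
    intro x y h
    obtain ⟨a, b, hab, hadj, hlt⟩ := orient h
    rw [hab, f_spec hadj hlt]
    omega
  have hfsupp : ∀ {x y : Fin n}, G.Adj x y → f s(x, y) ∈ S := by
    intro x y h
    obtain ⟨a, b, hab, hadj, hlt⟩ := orient h
    rw [hab, f_spec hadj hlt]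
    exact hS a ⟨b, hadj⟩
  obtain ⟨e0, he0⟩ := hne
  have hex : ∃ x y : Fin n, G.Adj x y := by
    revert he0
    induction e0 with
    | _ x y =>
      intro he0
      exact ⟨x, y, (SimpleGraph.mem_edgeSet G).mp (mem_edgeFinset.mp he0)⟩
  obtain ⟨x0, y0, h0⟩ := hex
  set r0 := root x0 with hr0
  have hrr : root r0 = r0 := congrArg Quot.out (hout x0)
  have hLr0 : L r0 = 0 := by
    have hnil : (SimpleGraph.Walk.nil : G.Walk r0 r0).copy rfl hrr.symm = (P r0).1 :=
      uniq _ ((SimpleGraph.Walk.isPath_copy _ _ _).mpr SimpleGraph.Walk.IsPath.nil)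
    show (P r0).1.length = 0
    rw [← hnil, SimpleGraph.Walk.length_copy, SimpleGraph.Walk.length_nil]
  have hr0supp : r0 ∈ G.support := by
    by_cases hx : x0 = r0
    · exact ⟨y0, hx ▸ h0⟩
    · have hlen : 0 < (P x0).1.length := by
        rcases Nat.eq_zero_or_pos (P x0).1.length with h | h
        · exact absurd (SimpleGraph.Walk.eq_of_length_eq_zero h) hx
        · exact h
      have hadj := SimpleGraph.Walk.adj_getVert_succ ((P x0).1.reverse) (i := 0)
        (by rwa [SimpleGraph.Walk.length_reverse])
      rw [SimpleGraph.Walk.getVert_zero] at hadj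
      exact ⟨_, hadj⟩
  have hinj : Set.InjOn f G.edgeFinset := by
    intro e1 h1 e2 h2 hfe
    rw [mem_coe, mem_edgeFinset] at h1 h2
    revert h1 h2 hfe
    induction e1 with
    | _ x1 y1 =>
      induction e2 with
      | _ x2 y2 =>
        intro h1 h2 hfe
        calc s(x1, y1) = s(f s(x1, y1), (P (f s(x1, y1))).1.getVert 1) :=
              e_form ((SimpleGraph.mem_edgeSet G).mp h1)
          _ = s(f s(x2, y2), (P (f s(x2, y2))).1.getVert 1) := by rw [hfe]
          _ = s(x2, y2) := (e_form ((SimpleGraph.mem_edgeSet G).mp h2)).symm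
  have hmaps : ∀ e ∈ G.edgeFinset, f e ∈ S.erase r0 := by
    intro e
    induction e with
    | _ x y =>
      intro he
      have hadj := (SimpleGraph.mem_edgeSet G).mp (mem_edgeFinset.mp he)
      rw [mem_erase]
      refine ⟨?_, hfsupp hadj⟩
      intro hfr
      have := hLpos hadj
      rw [hfr, hLr0] at this
      omega
  have hcard := Finset.card_le_card_of_injOn f hmaps hinj
  rw [Finset.card_erase_of_mem (hS r0 hr0supp)] at hcard
  have hpos : 0 < S.card := Finset.card_pos.mpr ⟨r0, hS r0 hr0supp⟩
  omega


theorem stmt10 {n : ℕ} (d : Fin n → ℕ) (hd : Antitone d) (hpos : ∀ i, 1 ≤ d i)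
    (heven : Even (∑ i, d i)) (hsum : ∑ i, d i ≤ 2 * n - 2)
    (k : ℕ) (hk1 : 1 ≤ k) (hkn : k ≤ n)
    (F : SimpleGraph (Fin n)) (hF : IsForestReal d F)
    (hind : IndepSet F {i | (i : ℕ) < k}) (hdom : DomSet F {i | (i : ℕ) < k}) :
    n - k ≤ psum d k ∧ psum d k ≤ ssum d k ∧
      ssum d k - psum d k ≤ 2 * (nGe2 d - k) - 2 := by
  classical
  obtain ⟨hacy, hdeg0⟩ := hF
  have hdeg : ∀ i, F.degree i = d i := by
    intro i
    rw [← hdeg0 i]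
    show _ = Nat.card {u // F.Adj i u}
    rw [Nat.card_eq_fintype_card, ← SimpleGraph.card_neighborSet_eq_degree]
    exact Fintype.card_congr (Equiv.subtypeEquivRight (fun _ => Iff.rfl)).symm
  set D : Finset (Fin n) := univ.filter (fun i : Fin n => (i : ℕ) < k) with hD
  set C : Finset (Fin n) := univ.filter (fun i : Fin n => ¬ (i : ℕ) < k) with hC
  have hcardD : D.card = k := by
    have heq : D.card = (Finset.range k).card :=
      Finset.card_bij' (fun a _ => (a : ℕ))
        (fun b hb => (⟨b, lt_of_lt_of_le (Finset.mem_range.mp hb) hkn⟩ : Fin n))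
        (fun a ha => Finset.mem_range.mpr ((Finset.mem_filter.mp ha).2))
        (fun b hb => Finset.mem_filter.mpr ⟨Finset.mem_univ _, Finset.mem_range.mp hb⟩)
        (fun a ha => rfl) (fun b hb => rfl)
    rw [heq, Finset.card_range]
  have hDCn : D.card + C.card = n := by
    rw [hD, hC]
    have := Finset.card_filter_add_card_filter_not (s := (univ : Finset (Fin n)))
      (p := fun i : Fin n => (i : ℕ) < k)
    rwa [Finset.card_univ, Fintype.card_fin] at this
  have hcardC : C.card = n - k := by omega
  -- neighbor counts
  set a : Fin n → ℕ := fun v => (D.filter (fun u => F.Adj v u)).card with ha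
  set b : Fin n → ℕ := fun v => (C.filter (fun u => F.Adj v u)).card with hb
  have hsplit : ∀ v, a v + b v = F.degree v := by
    intro v
    have hDa : D.filter (fun u => F.Adj v u)
        = (F.neighborFinset v).filter (fun i : Fin n => (i : ℕ) < k) := by
      ext u
      simp [hD, SimpleGraph.mem_neighborFinset, Finset.mem_filter, and_comm]
    have hCb : C.filter (fun u => F.Adj v u)
        = (F.neighborFinset v).filter (fun i : Fin n => ¬ (i : ℕ) < k) := by
      ext u
      simp [hC, SimpleGraph.mem_neighborFinset, Finset.mem_filter, and_comm]
    show (D.filter (fun u => F.Adj v u)).card + (C.filter (fun u => F.Adj v u)).card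
      = F.degree v
    rw [hDa, hCb]
    exact Finset.card_filter_add_card_filter_not _
  have haD : ∀ v ∈ D, a v = 0 := by
    intro v hv
    show (D.filter (fun u => F.Adj v u)).card = 0
    rw [Finset.card_eq_zero, Finset.filter_eq_empty_iff]
    intro u hu
    exact hind v (Finset.mem_filter.mp hv).2 u (Finset.mem_filter.mp hu).2
  have haC : ∀ v ∈ C, 1 ≤ a v := by
    intro v hv
    obtain ⟨u, hu, huv⟩ := hdom v (Finset.mem_filter.mp hv).2
    show 1 ≤ (D.filter (fun u => F.Adj v u)).card
    refine Finset.card_pos.mpr ⟨u, Finset.mem_filter.mpr ⟨?_, huv.symm⟩⟩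
    rw [hD]
    exact Finset.mem_filter.mpr ⟨Finset.mem_univ _, hu⟩
  -- double counting
  have hdouble : ∀ s t : Finset (Fin n),
      ∑ u ∈ s, (t.filter (fun w => F.Adj u w)).card
        = ∑ w ∈ t, (s.filter (fun u => F.Adj w u)).card := by
    intro s t
    simp only [Finset.card_filter]
    rw [Finset.sum_comm]
    refine Finset.sum_congr rfl fun w _ => Finset.sum_congr rfl fun u _ => ?_
    simp [SimpleGraph.adj_comm]
  have hpsumD : psum d k = ∑ v ∈ D, F.degree v := by
    rw [psum, hD, Finset.sum_filter]
    exact Finset.sum_congr rfl fun i _ => by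
      by_cases h : (i : ℕ) < k <;> simp [h, hdeg]
  have hssumC : ssum d k = ∑ v ∈ C, F.degree v := by
    rw [ssum, hC, Finset.sum_filter]
    exact Finset.sum_congr rfl fun i _ => by
      by_cases h : k ≤ (i : ℕ) <;> simp [h, Nat.not_lt, hdeg]
  have hpsum_cross : psum d k = ∑ v ∈ C, a v := by
    rw [hpsumD]
    have h1 : ∑ v ∈ D, F.degree v = ∑ v ∈ D, b v := by
      refine Finset.sum_congr rfl fun v hv => ?_
      have := hsplit v
      have := haD v hv
      omega
    rw [h1]
    show ∑ v ∈ D, (C.filter (fun u => F.Adj v u)).card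
      = ∑ v ∈ C, (D.filter (fun u => F.Adj v u)).card
    exact hdouble D C
  have part1 : n - k ≤ psum d k := by
    rw [hpsum_cross]
    calc n - k = ∑ _v ∈ C, 1 := by rw [Finset.sum_const, smul_eq_mul, mul_one, hcardC]
      _ ≤ ∑ v ∈ C, a v := Finset.sum_le_sum haC
  set M : ℕ := ∑ v ∈ C, b v with hM
  have hss : ssum d k = psum d k + M := by
    rw [hssumC, hpsum_cross, hM, ← Finset.sum_add_distrib]
    exact Finset.sum_congr rfl fun v _ => (hsplit v).symm
  refine ⟨part1, by omega, ?_⟩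
  -- Part 3
  set G' : SimpleGraph (Fin n) :=
    { Adj := fun u v => (k ≤ (u : ℕ)) ∧ (k ≤ (v : ℕ)) ∧ F.Adj u v,
      symm := by
        constructor
        rintro u v ⟨h1, h2, h3⟩
        exact ⟨h2, h1, h3.symm⟩,
      loopless := ⟨fun v h => F.irrefl h.2.2⟩ } with hG'
  have hadj' : ∀ {u v : Fin n}, G'.Adj u v → (k ≤ (u : ℕ)) ∧ (k ≤ (v : ℕ)) ∧ F.Adj u v :=
    fun h => h
  have hle : G' ≤ F := fun {u v} h => (hadj' h).2.2
  have hG'acy : G'.IsAcyclic := by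
    intro v c hc
    exact hacy (c.mapLe hle) (hc.mapLe hle)
  have hdegG'C : ∀ v ∈ C, G'.degree v = b v := by
    intro v hv
    have hkv : k ≤ (v : ℕ) := Nat.not_lt.mp (Finset.mem_filter.mp hv).2
    show (G'.neighborFinset v).card = (C.filter (fun u => F.Adj v u)).card
    congr 1
    ext u
    rw [SimpleGraph.mem_neighborFinset]
    show ((k ≤ (v : ℕ)) ∧ (k ≤ (u : ℕ)) ∧ F.Adj v u) ↔ _
    simp only [Finset.mem_filter, hC, Finset.mem_univ, true_and, Nat.not_lt]
    constructor
    · intro h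
      exact ⟨h.2.1, h.2.2⟩
    · intro h
      exact ⟨hkv, h.1, h.2⟩
  have hdegG'D : ∀ v ∈ D, G'.degree v = 0 := by
    intro v hv
    have hkv : (v : ℕ) < k := (Finset.mem_filter.mp hv).2
    show (G'.neighborFinset v).card = 0
    rw [Finset.card_eq_zero]
    ext u
    simp only [SimpleGraph.mem_neighborFinset, Finset.notMem_empty, iff_false]
    intro h
    have : k ≤ (v : ℕ) := (hadj' h).1
    omega
  have hMdeg : M = ∑ v, G'.degree v := by
    have hU : (univ : Finset (Fin n)) = D ∪ C := by
      rw [hD, hC]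
      ext i
      simp only [Finset.mem_union, hD, hC, Finset.mem_filter, Finset.mem_univ, true_and,
        Finset.mem_univ, iff_true]
      exact ⟨fun _ => em _, fun _ => trivial⟩
    have hDC : Disjoint D C := by
      rw [hD, hC]
      rw [Finset.disjoint_filter]
      intro i _ h h'
      exact h' h
    rw [hM, hU, Finset.sum_union hDC]
    rw [Finset.sum_congr rfl hdegG'D, Finset.sum_congr rfl hdegG'C]
    simp
  have hM2 : M = 2 * G'.edgeFinset.card := by
    rw [hMdeg, SimpleGraph.sum_degrees_eq_twice_card_edges]
  rcases Nat.eq_zero_or_pos G'.edgeFinset.card with h0 | h0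
  · have : M = 0 := by omega
    omega
  -- nonempty edge set: apply the forest bound
  have hge2lt : ∀ v : Fin n, 2 ≤ d v → (v : ℕ) < nGe2 d := by
    intro v hv2
    by_contra hnot
    have hsub : Finset.Iic v ⊆ univ.filter (fun i => 2 ≤ d i) := by
      intro j hj
      refine Finset.mem_filter.mpr ⟨Finset.mem_univ _, ?_⟩
      exact le_trans hv2 (hd (Finset.mem_Iic.mp hj))
    have := Finset.card_le_card hsub
    rw [Fin.card_Iic] at this
    rw [nGe2] at hnot
    omega
  set T : Finset (Fin n) := univ.filter (fun v => k ≤ (v : ℕ) ∧ (v : ℕ) < nGe2 d) with hT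
  have hsupp : ∀ v, v ∈ G'.support → v ∈ T := by
    intro v hv
    obtain ⟨w, hvw0⟩ := hv
    have hvw := hadj' hvw0
    have hkv : k ≤ (v : ℕ) := hvw.1
    have hvC : v ∈ C := Finset.mem_filter.mpr ⟨Finset.mem_univ _, by omega⟩
    have hb1 : 1 ≤ b v := by
      show 1 ≤ (C.filter (fun u => F.Adj v u)).card
      refine Finset.card_pos.mpr ⟨w, Finset.mem_filter.mpr ⟨?_, hvw.2.2⟩⟩
      have hw : k ≤ (w : ℕ) := hvw.2.1
      rw [hC]
      exact Finset.mem_filter.mpr ⟨Finset.mem_univ _, by omega⟩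
    have ha1 : 1 ≤ a v := haC v hvC
    have hd2 : 2 ≤ d v := by
      rw [← hdeg, ← hsplit v]
      omega
    exact Finset.mem_filter.mpr ⟨Finset.mem_univ _, hkv, hge2lt v hd2⟩
  have hTcard : T.card ≤ nGe2 d - k := by
    rw [show nGe2 d - k = (Finset.Ico k (nGe2 d)).card by rw [Nat.card_Ico]]
    refine Finset.card_le_card_of_injOn (fun v => (v : ℕ))
      (fun v hv => Finset.mem_Ico.mpr (Finset.mem_filter.mp hv).2)
      (fun x _ y _ hxy => Fin.val_injective hxy)
  have hbound := forest_edge_bound G' hG'acy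
    (Finset.card_pos.mp h0) T hsupp
  omega
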